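/- Let R be a semiperfect ring of characteristic p and R♭ its inverse perfection with J = ker(R♭ → R) finitely generated. Then J' = ⋃_n Φ^{-n}(J^{p^n}) is an ideal of definition of R♭ satisfying Φ(J') = (J')^p, and R♭/J' is semiperfect and isogenous to R (i.e., the kernel of R♭/J' → R♭/J'' for the comparison is killed by a power of Frobenius). -/

import Mathlib

set_option synthInstance.maxHeartbeats 1000000
set_option maxHeartbeats 1000000

/-- The ideal generated by the image of `J` under the `n`-th iterate of the
Frobenius `Φ : x ↦ x^p`. -/
def frobPowIdeal {R : Type*} [CommRing R] (p n : ℕ) (J : Ideal R) : Ideal R :=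
  Ideal.span ((fun x => x ^ p ^ n) '' (J : Set R))

section Aux

variable {A : Type*} [CommRing A]

/-- Pigeonhole: a high power of a finitely generated ideal lands in the ideal
generated by `q`-th powers of the generators. -/
lemma spanPow_le (s : Finset A) (q e : ℕ) (hq : 1 ≤ q)
    (he : s.card * (q - 1) < e) :
    Ideal.span (s : Set A) ^ e ≤ Ideal.span ((fun x => x ^ q) '' (s : Set A)) := by
  classical
  rw [Ideal.span, Submodule.span_pow]
  refine Ideal.span_le.2 ?_
  intro a ha
  rw [Set.mem_pow] at ha
  obtain ⟨f, hf⟩ := ha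
  have ha' : a = ∏ i : Fin e, (f i : A) := by rw [← hf, List.prod_ofFn]
  have hmaps : ∀ i ∈ (Finset.univ : Finset (Fin e)), (f i : A) ∈ s := by
    intro i _; exact (f i).2
  have hcard : s.card * (q - 1) < (Finset.univ : Finset (Fin e)).card := by
    simpa using he
  obtain ⟨g, hgs, hfib⟩ :=
    Finset.exists_lt_card_fiber_of_mul_lt_card_of_maps_to hmaps hcard
  set T := Finset.univ.filter (fun i : Fin e => (f i : A) = g) with hT
  have hq_le : q ≤ T.card := by omega
  have hprodT : ∏ i ∈ T, (f i : A) = g ^ T.card := by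
    rw [Finset.prod_congr rfl (fun i hi => (Finset.mem_filter.1 hi).2),
      Finset.prod_const]
  have hsplit : a = g ^ q *
      (g ^ (T.card - q) * ∏ i ∈ Finset.univ.filter (fun i : Fin e => ¬((f i : A) = g)), (f i : A)) := by
    rw [ha', ← Finset.prod_filter_mul_prod_filter_not Finset.univ
      (fun i : Fin e => (f i : A) = g), ← hT, hprodT, ← mul_assoc, ← pow_add,
      Nat.add_sub_cancel' hq_le]
  rw [hsplit]
  exact Ideal.mul_mem_right _ _ (Ideal.subset_span ⟨g, hgs, rfl⟩)

lemma comap_pow_le {B : Type*} [CommRing B] (f : A →+* B) (I : Ideal B) (m : ℕ) :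
    (Ideal.comap f I) ^ m ≤ Ideal.comap f (I ^ m) := by
  induction m with
  | zero => simp [Ideal.one_eq_top]
  | succ m ih =>
      rw [pow_succ, pow_succ]
      refine Ideal.mul_le.2 fun r hr t ht => ?_
      have : f (r * t) = f r * f t := map_mul f r t
      refine Ideal.mem_comap.2 ?_
      rw [this]
      exact Ideal.mul_mem_mul (ih hr) ht

end Aux

/-- Let `R` be a semiperfect ring of characteristic `p`, `R♭` its
inverse perfection, `J = ker (R♭ → R)` finitely generated.  Then
`J' = ⋃_n Φ^{-n}(J^{p^n})` is an ideal of definition of `R♭` with `Φ(J') = (J')^p`, the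
quotient `R♭/J'` is semiperfect, and it is isogenous to `R`: every element of `J'` is
sent into `J` by a fixed power of Frobenius. -/
theorem stmt_1 (p : ℕ) [Fact p.Prime] (R : Type*) [CommRing R] [CharP R p]
    (hsurj : ∀ x : R, ∃ y : R, y ^ p = x)
    (J : Ideal (Perfection R p))
    (hJ : J = RingHom.ker (Perfection.coeff R p 0))
    (hfg : J.FG) :
    ∃ J' : Ideal (Perfection R p),
      -- J' is the union of the Φ^{-n}(J^{p^n})
      (J' : Set (Perfection R p)) = {x | ∃ n : ℕ, x ^ p ^ n ∈ J ^ p ^ n} ∧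
      -- Φ(J') = (J')^p
      frobPowIdeal p 1 J' = J' ^ p ∧
      -- J' is an ideal of definition: cofinal with the basis of ideals Φ^n(J)
      (∀ n : ℕ, ∃ m : ℕ, J' ^ m ≤ frobPowIdeal p n J) ∧
      (∀ n : ℕ, ∃ m : ℕ, frobPowIdeal p m J ≤ J' ^ n) ∧
      -- R♭/J' is semiperfect
      (∀ y : Perfection R p ⧸ J', ∃ x, x ^ p = y) ∧
      -- R♭/J' is isogenous to R: the kernel of the comparison is killed by a power of Frobenius
      (∃ n : ℕ, ∀ x ∈ J', x ^ p ^ n ∈ J) := by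
  classical
  obtain ⟨s, hs⟩ := hfg
  have hp : p.Prime := Fact.out
  haveI : ExpChar (Perfection R p) p := .prime hp
  set φ : ℕ → ((Perfection R p) →+* (Perfection R p)) := fun n => iterateFrobenius (Perfection R p) p n with hφ
  have hφ_apply : ∀ n (x : (Perfection R p)), φ n x = x ^ p ^ n := fun n x => rfl
  have hφbij : ∀ n, Function.Bijective (φ n) := fun n => bijective_iterateFrobenius (Perfection R p) p n
  set Fi : ℕ → Ideal (Perfection R p) := fun n => Ideal.comap (φ n) (J ^ p ^ n) with hFi
  have mem_Fi : ∀ (n : ℕ) (x : (Perfection R p)), x ∈ Fi n ↔ x ^ p ^ n ∈ J ^ p ^ n := fun n x => Iff.rfl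
  have hmono : Monotone Fi := by
    refine monotone_nat_of_le_succ fun n x hx => ?_
    rw [mem_Fi] at hx ⊢
    have h2 := Ideal.pow_mem_pow hx p
    rwa [← pow_mul, ← pow_mul, ← pow_succ] at h2
  have hdir : Directed (· ≤ ·) Fi := hmono.directed_le
  set J' : Ideal (Perfection R p) := ⨆ n, Fi n with hJ'
  have memJ' : ∀ x : (Perfection R p), x ∈ J' ↔ ∃ n, x ∈ Fi n := fun x =>
    Submodule.mem_iSup_of_directed Fi hdir
  have hsJ : (s : Set (Perfection R p)) ⊆ (J : Set (Perfection R p)) := hs ▸ Ideal.subset_span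
  -- frobPowIdeal as a map
  have frobPow_eq_map : ∀ (t : ℕ) (I : Ideal (Perfection R p)),
      frobPowIdeal p t I = Ideal.map (φ t) I := fun t I => rfl
  -- J ≤ J'
  have hJle : J ≤ J' := by
    intro x hx
    rw [memJ']
    exact ⟨0, by rw [mem_Fi, pow_zero, pow_one, pow_one]; exact hx⟩
  -- Property 2 : Φ(J') = J'^p
  have prop2 : frobPowIdeal p 1 J' = J' ^ p := by
    apply le_antisymm
    · rw [frobPow_eq_map, Ideal.map_le_iff_le_comap]
      intro x hx
      refine Ideal.mem_comap.2 ?_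
      rw [hφ_apply, pow_one]
      exact Ideal.pow_mem_pow hx p
    · conv_lhs => rw [← Ideal.span_eq J', Ideal.span, Submodule.span_pow]
      refine Ideal.span_le.2 fun a ha => ?_
      rw [Set.mem_pow] at ha
      obtain ⟨f, hf⟩ := ha
      have ha' : a = ∏ i : Fin p, (f i : (Perfection R p)) := by rw [← hf, List.prod_ofFn]
      -- find a common N
      have hmemf : ∀ i : Fin p, ∃ n, ((f i : (Perfection R p))) ∈ Fi n := fun i => (memJ' _).1 (f i).2
      choose g hg using hmemf
      set N := Finset.univ.sup g with hN
      have hgN : ∀ i : Fin p, ((f i : (Perfection R p))) ∈ Fi N := fun i =>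
        hmono (Finset.le_sup (Finset.mem_univ i)) (hg i)
      obtain ⟨y, hy⟩ := (hφbij 1).2 a
      have hyJ' : y ∈ J' := by
        rw [memJ']
        refine ⟨N + 1, ?_⟩
        rw [mem_Fi]
        have h1 : y ^ p ^ (N + 1) = a ^ p ^ N := by
          rw [← hy, hφ_apply, pow_one, ← pow_mul, pow_succ']
        rw [h1, ha', ← Finset.prod_pow]
        have h2 : ∀ i : Fin p, ((f i : (Perfection R p))) ^ p ^ N ∈ J ^ p ^ N := fun i =>
          (mem_Fi N _).1 (hgN i)
        have h3 : (∏ i : Fin p, ((f i : (Perfection R p))) ^ p ^ N) ∈ (J ^ p ^ N) ^ p := by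
          have := Ideal.prod_mem_prod (s := (Finset.univ : Finset (Fin p)))
            (I := fun _ : Fin p => J ^ p ^ N)
            (x := fun i => ((f i : (Perfection R p))) ^ p ^ N) (fun i _ => h2 i)
          rwa [Finset.prod_const, Finset.card_univ, Fintype.card_fin] at this
        rwa [← pow_mul, ← pow_succ] at h3
      have hya : y ^ p ^ 1 = a := by rw [← hφ_apply 1 y]; exact hy
      exact Ideal.subset_span ⟨y, hyJ', hya⟩
  -- map φ m J' = J' ^ p ^ m
  have hmapm : ∀ m : ℕ, Ideal.map (φ m) J' = J' ^ p ^ m := by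
    intro m
    induction m with
    | zero =>
        have h0 : φ 0 = RingHom.id (Perfection R p) := iterateFrobenius_zero (Perfection R p) p
        rw [h0, Ideal.map_id, pow_zero, pow_one]
    | succ m ih =>
        have hcomp : φ (m + 1) = (φ 1).comp (φ m) := by
          ext x
          simp only [RingHom.comp_apply, hφ_apply]
          rw [pow_one, ← pow_mul, pow_succ]
        have hm1 : Ideal.map (φ 1) J' = J' ^ p := (frobPow_eq_map 1 J').symm.trans prop2
        rw [hcomp, ← Ideal.map_map, ih, Ideal.map_pow, hm1, ← pow_mul, ← pow_succ']
  -- Property 3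
  have prop3 : ∀ n : ℕ, ∃ m : ℕ, J' ^ m ≤ frobPowIdeal p n J := by
    intro n
    refine ⟨s.card * p ^ n + 1, ?_⟩
    set m := s.card * p ^ n + 1 with hm
    -- step 1 : J'^m ≤ ⨆ N, (Fi N)^m
    have step1 : ∀ m' : ℕ, J' ^ m' ≤ ⨆ N, (Fi N) ^ m' := by
      intro m'
      induction m' with
      | zero => exact le_iSup_of_le 0 (by simp)
      | succ m' ih =>
          rw [pow_succ]
          refine le_trans (Ideal.mul_mono ih le_rfl) (Ideal.mul_le.2 fun r hr t ht => ?_)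
          have hdir' : Directed (· ≤ ·) fun N => (Fi N) ^ m' :=
            fun a b => (hdir a b).imp fun c ⟨h1, h2⟩ =>
              ⟨Ideal.pow_right_mono h1 m', Ideal.pow_right_mono h2 m'⟩
          obtain ⟨N, hN⟩ := (Submodule.mem_iSup_of_directed _ hdir').1 hr
          obtain ⟨M, hM⟩ := (memJ' t).1 ht
          refine Submodule.mem_iSup_of_mem (max N M) ?_
          rw [pow_succ]
          exact Ideal.mul_mem_mul
            (Ideal.pow_right_mono (hmono (le_max_left N M)) m' hN)
            (hmono (le_max_right N M) hM)
    refine le_trans (step1 m) (iSup_le fun N => ?_)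
    -- step 2 : (Fi N)^m ≤ frobPowIdeal p n J
    have h1 : (Fi N) ^ m ≤ Ideal.comap (φ N) ((J ^ p ^ N) ^ m) := comap_pow_le _ _ _
    have h2 : (J ^ p ^ N) ^ m ≤ Ideal.span ((fun x => x ^ p ^ (N + n)) '' (s : Set (Perfection R p))) := by
      rw [← pow_mul, ← hs]
      refine spanPow_le s (p ^ (N + n)) (p ^ N * m) (Nat.one_le_pow _ _ hp.pos) ?_
      have he : p ^ N * m = s.card * p ^ (N + n) + p ^ N := by
        rw [hm, pow_add]; ring
      calc s.card * (p ^ (N + n) - 1) ≤ s.card * p ^ (N + n) :=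
            Nat.mul_le_mul_left _ (Nat.sub_le _ _)
        _ < s.card * p ^ (N + n) + p ^ N :=
            Nat.lt_add_of_pos_right (Nat.pow_pos hp.pos)
        _ = p ^ N * m := he.symm
    have h3 : Ideal.span ((fun x => x ^ p ^ (N + n)) '' (s : Set (Perfection R p)))
        ≤ frobPowIdeal p (N + n) J := Ideal.span_mono (Set.image_mono hsJ)
    have h4 : Ideal.comap (φ N) (frobPowIdeal p (N + n) J) = frobPowIdeal p n J := by
      rw [frobPow_eq_map, frobPow_eq_map]
      have hcomp : φ (N + n) = (φ N).comp (φ n) := by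
        ext x
        simp only [RingHom.comp_apply, hφ_apply]
        rw [← pow_mul, ← pow_add, add_comm n N]
      rw [hcomp, ← Ideal.map_map, Ideal.comap_map_of_bijective _ (hφbij N)]
    calc (Fi N) ^ m ≤ Ideal.comap (φ N) ((J ^ p ^ N) ^ m) := h1
      _ ≤ Ideal.comap (φ N) (frobPowIdeal p (N + n) J) :=
          Ideal.comap_mono (le_trans h2 h3)
      _ = frobPowIdeal p n J := h4
  -- Property 4
  have prop4 : ∀ n : ℕ, ∃ m : ℕ, frobPowIdeal p m J ≤ J' ^ n := by
    intro n
    refine ⟨n, ?_⟩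
    rw [frobPow_eq_map]
    calc Ideal.map (φ n) J ≤ Ideal.map (φ n) J' := Ideal.map_mono hJle
      _ = J' ^ p ^ n := hmapm n
      _ ≤ J' ^ n := Ideal.pow_le_pow_right (Nat.le_of_lt (Nat.lt_pow_self (n := n) hp.one_lt))
  -- Property 5
  have prop5 : ∀ y : (Perfection R p) ⧸ J', ∃ x, x ^ p = y := by
    intro y
    obtain ⟨x, rfl⟩ := Ideal.Quotient.mk_surjective y
    obtain ⟨z, hz⟩ := (bijective_frobenius (Perfection R p) p).2 x
    exact ⟨Ideal.Quotient.mk J' z, by rw [← map_pow, ← frobenius_def, hz]⟩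
  -- Property 6
  have prop6 : ∃ n : ℕ, ∀ x ∈ J', x ^ p ^ n ∈ J := by
    refine ⟨s.card, fun x hx => ?_⟩
    obtain ⟨N, hN⟩ := (memJ' x).1 hx
    have hN' : x ∈ Fi (N + s.card) := hmono (Nat.le_add_right _ _) hN
    rw [mem_Fi] at hN'
    have h2 : J ^ p ^ (N + s.card) ≤ Ideal.span ((fun y => y ^ p ^ N) '' (s : Set (Perfection R p))) := by
      rw [← hs]
      refine spanPow_le s (p ^ N) (p ^ (N + s.card)) (Nat.one_le_pow _ _ hp.pos) ?_
      calc s.card * (p ^ N - 1) ≤ s.card * p ^ N :=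
            Nat.mul_le_mul_left _ (Nat.sub_le _ _)
        _ < p ^ s.card * p ^ N :=
            (Nat.mul_lt_mul_right (Nat.pow_pos hp.pos)).2
              (lt_of_lt_of_le Nat.lt_two_pow_self (Nat.pow_le_pow_left hp.two_le _))
        _ = p ^ (N + s.card) := by rw [← pow_add, add_comm]
    have h3 : x ^ p ^ (N + s.card) ∈ Ideal.map (φ N) J := by
      refine (Ideal.span_mono (Set.image_mono hsJ)) (h2 hN')
    rw [Ideal.mem_map_iff_of_surjective _ (hφbij N).2] at h3
    obtain ⟨w, hw, hw2⟩ := h3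
    have : φ N (x ^ p ^ s.card) = φ N w := by
      rw [hφ_apply, hw2, ← pow_mul, ← pow_add, add_comm]
    have := (hφbij N).1 this
    rwa [this]
  -- Property 1
  have prop1 : (J' : Set (Perfection R p)) = {x | ∃ n : ℕ, x ^ p ^ n ∈ J ^ p ^ n} := by
    ext x
    simp only [SetLike.mem_coe, Set.mem_setOf_eq, memJ' x]
    exact exists_congr fun n => mem_Fi n x
  exact ⟨J', prop1, prop2, prop3, prop4, prop5, prop6⟩
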